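/- Let G=(V,E) be a finite simple graph of maximum degree Δ ≥ 1 without isolated vertices, and let U ⊆ V be an independent set. Then there exists a subset U' ⊆ U with Δ·|U'| ≥ |U| such that (G,U') is a yes-instance of Ext VC, i.e., G has a minimal vertex cover containing U'. In particular, there is a minimal vertex cover S of G with Δ·|S∩U| ≥ opt_MaxExtVC(G,U). -/

import Mathlib

/-- `S` is a vertex cover of `G`: every edge has an endpoint in `S`. -/
def IsVertexCover {V : Type*} (G : SimpleGraph V) (S : Set V) : Prop :=
  ∀ ⦃u v : V⦄, G.Adj u v → u ∈ S ∨ v ∈ S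

/-- `S` is a minimal vertex cover of `G`: no proper subset is a vertex cover. -/
def IsMinimalVertexCover {V : Type*} (G : SimpleGraph V) (S : Set V) : Prop :=
  IsVertexCover G S ∧ ∀ T : Set V, T ⊂ S → ¬ IsVertexCover G T

/-- `S` is an independent set of `G`: pairwise non-adjacent vertices. -/
def IsIndepSet {V : Type*} (G : SimpleGraph V) (S : Set V) : Prop :=
  ∀ ⦃u v : V⦄, u ∈ S → v ∈ S → ¬ G.Adj u v

/-- `S` is a maximal independent set of `G`: no proper superset is independent. -/
def IsMaximalIndepSet {V : Type*} (G : SimpleGraph V) (S : Set V) : Prop :=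
  IsIndepSet G S ∧ ∀ T : Set V, S ⊂ T → ¬ IsIndepSet G T

/-- `(G, U)` is a yes-instance of Ext VC: some minimal vertex cover contains `U`. -/
def ExtVC {V : Type*} (G : SimpleGraph V) (U : Set V) : Prop :=
  ∃ S : Set V, U ⊆ S ∧ IsMinimalVertexCover G S

/-- `(G, U)` is a yes-instance of Ext IS: some maximal independent set is contained in `U`. -/
def ExtIS {V : Type*} (G : SimpleGraph V) (U : Set V) : Prop :=
  ∃ S : Set V, S ⊆ U ∧ IsMaximalIndepSet G S

/-- The closed neighborhood `N_G[U]` of a set `U` of vertices. -/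
def closedNbhd {V : Type*} (G : SimpleGraph V) (U : Set V) : Set V :=
  U ∪ {v | ∃ u ∈ U, G.Adj u v}

/-- `S` is a dominating set of `G`: every vertex is in `S` or adjacent to a vertex of `S`. -/
def IsDominating {V : Type*} (G : SimpleGraph V) (S : Set V) : Prop :=
  ∀ v : V, v ∈ S ∨ ∃ u ∈ S, G.Adj u v

/-- `opt_MaxExtVC(G, U)`: the maximum of `|S ∩ U|` over all minimal vertex covers `S` of `G`. -/
noncomputable def optMaxExtVC {V : Type*} (G : SimpleGraph V) (U : Set V) : ℕ :=
  sSup {n : ℕ | ∃ S : Set V, IsMinimalVertexCover G S ∧ n = (S ∩ U).ncard}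

/-- `opt_MinExtIS(G, U)`: the minimum of `|U| + |S ∩ (V \ U)|` over all maximal independent
sets `S` of `G`. -/
noncomputable def optMinExtIS {V : Type*} (G : SimpleGraph V) (U : Set V) : ℕ :=
  sInf {n : ℕ | ∃ S : Set V, IsMaximalIndepSet G S ∧ n = U.ncard + (S ∩ Uᶜ).ncard}

/-- covering a set by a family of small sets bounds its cardinality -/
lemma aux_cover_card_le {α : Type*} [Fintype α] (P : α → Set α) (k : ℕ)
    (hP : ∀ y, (P y).ncard ≤ k) (Y : Set α) :
    ∀ I : Set α, I ⊆ ⋃ y ∈ Y, P y → I.ncard ≤ Y.ncard * k := by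
  classical
  refine Set.Finite.induction_on
    (motive := fun Y _ => ∀ I : Set α, I ⊆ (⋃ y ∈ Y, P y) → I.ncard ≤ Y.ncard * k)
    Y (Set.toFinite Y) ?_ ?_
  · intro I hI
    simp only [Set.mem_empty_iff_false, Set.iUnion_of_empty, Set.iUnion_empty,
      Set.subset_empty_iff] at hI
    simp [hI]
  · intro a Y' ha hY' ih I hI
    have hsplit : I ⊆ (I ∩ P a) ∪ (I \ P a) := by
      intro x hx
      by_cases hxa : x ∈ P a
      · exact Or.inl ⟨hx, hxa⟩
      · exact Or.inr ⟨hx, hxa⟩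
    have h1 : (I ∩ P a).ncard ≤ k :=
      le_trans (Set.ncard_le_ncard Set.inter_subset_right) (hP a)
    have h2 : (I \ P a).ncard ≤ Y'.ncard * k := by
      refine ih _ ?_
      intro x hx
      have := hI hx.1
      simp only [Set.mem_iUnion, Set.mem_insert_iff, exists_prop] at this ⊢
      obtain ⟨y, hy, hxy⟩ := this
      rcases hy with rfl | hy
      · exact absurd hxy hx.2
      · exact ⟨y, hy, hxy⟩
    calc I.ncard ≤ ((I ∩ P a) ∪ (I \ P a)).ncard := Set.ncard_le_ncard hsplit
      _ ≤ (I ∩ P a).ncard + (I \ P a).ncard := Set.ncard_union_le _ _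
      _ ≤ k + Y'.ncard * k := add_le_add h1 h2
      _ = (insert a Y').ncard * k := by
          rw [Set.ncard_insert_of_notMem ha]; ring

/-- Greedy covering lemma: there is an independent set `J` disjoint from `U`
whose neighborhood covers at least `|U|/Δ` vertices of `U`. -/
lemma greedy_cover {V : Type*} [Fintype V] (G : SimpleGraph V) (Δ : ℕ)
    (hdeg : ∀ v : V, (G.neighborSet v).ncard ≤ Δ) :
    ∀ (n : ℕ) (U W : Set V), U.ncard ≤ n → U ⊆ W → IsIndepSet G U →
      (∀ u ∈ U, ∃ y ∈ W, G.Adj u y) →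
      ∃ J : Set V, J ⊆ W \ U ∧ IsIndepSet G J ∧
        U.ncard ≤ Δ * {u | u ∈ U ∧ ∃ j ∈ J, G.Adj j u}.ncard := by
  classical
  intro n
  induction n with
  | zero =>
    intro U W hcard _ _ _
    refine ⟨∅, Set.empty_subset _, (by intro u v hu _ _; exact hu.elim), ?_⟩
    omega
  | succ n ih =>
    intro U W hcard hUW hU hnbr
    rcases U.eq_empty_or_nonempty with rfl | ⟨u₀, hu₀⟩
    · exact ⟨∅, Set.empty_subset _, (by intro u v hu _ _; exact hu.elim), by simp⟩
    -- candidate set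
    obtain ⟨y₀, hy₀W, hy₀adj⟩ := hnbr u₀ hu₀
    have hy₀U : y₀ ∉ U := fun h => hU hu₀ h hy₀adj
    have hsne : (W \ U).Nonempty := ⟨y₀, hy₀W, hy₀U⟩
    set f : V → ℕ := fun x => (G.neighborSet x ∩ U).ncard with hf
    obtain ⟨x, hxWU, hxmax⟩ := Set.exists_max_image (W \ U) f (Set.toFinite _) hsne
    set g : ℕ := f x with hg
    have hg1 : 1 ≤ g := by
      have h0 : 0 < f y₀ := (Set.ncard_pos (Set.toFinite _)).2 ⟨u₀, hy₀adj.symm, hu₀⟩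
      have h1 := hxmax y₀ ⟨hy₀W, hy₀U⟩
      omega
    set Cov : Set V := G.neighborSet x ∩ U with hCov
    set W' : Set V := W \ insert x (G.neighborSet x) with hW'
    set Iso : Set V := {u | u ∈ U ∩ W' ∧ ∀ y ∈ W', ¬ G.Adj u y} with hIso
    set W'' : Set V := W' \ Iso with hW''
    set U'' : Set V := U ∩ W'' with hU''
    have hxU : x ∉ U := hxWU.2
    -- U'' has neighbors in W''
    have hnbr'' : ∀ u ∈ U'', ∃ y ∈ W'', G.Adj u y := by
      rintro u ⟨huU, huW', huIso⟩
      by_contra hcon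
      push_neg at hcon
      refine huIso ⟨⟨huU, huW'⟩, ?_⟩
      intro y hyW' hadj
      have hyU : y ∉ U := fun h => hU huU h hadj
      have hyIso : y ∉ Iso := fun h => hyU h.1.1
      exact hcon y ⟨hyW', hyIso⟩ hadj
    -- U'' small
    have hCovU : Cov ⊆ U := Set.inter_subset_right
    have hCovne : Cov.Nonempty := by
      refine (Set.ncard_pos (Set.toFinite _)).1 ?_
      have h0 : Cov.ncard = g := rfl
      omega
    have hU''sub : U'' ⊆ U \ Cov := by
      rintro u ⟨huU, huW'', _⟩
      refine ⟨huU, fun hc => ?_⟩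
      have : u ∈ insert x (G.neighborSet x) := Or.inr hc.1
      exact huW''.2 this
    have hU''card : U''.ncard ≤ n := by
      have h1 : (U \ Cov).ncard = U.ncard - Cov.ncard := Set.ncard_diff hCovU
      have h2 : 0 < Cov.ncard := (Set.ncard_pos (Set.toFinite _)).2 hCovne
      have h3 : U''.ncard ≤ (U \ Cov).ncard := Set.ncard_le_ncard hU''sub
      omega
    -- apply induction
    obtain ⟨J', hJ'sub, hJ'indep, hJ'count⟩ :=
      ih U'' W'' hU''card Set.inter_subset_right
        (fun u v hu hv => hU hu.1 hv.1) hnbr''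
    -- the new set
    refine ⟨insert x J', ?_, ?_, ?_⟩
    · -- subset of W \ U
      rintro j (rfl | hj)
      · exact hxWU
      · obtain ⟨hjW'', hjU''⟩ := hJ'sub hj
        refine ⟨hjW''.1.1, fun hjU => hjU'' ⟨hjU, hjW''⟩⟩
    · -- independent
      have hxnotJ' : x ∉ J' := fun h => (hJ'sub h).1.1.2 (Set.mem_insert x _)
      rintro a b (rfl | ha) (rfl | hb) hadj
      · exact G.irrefl hadj
      · exact (hJ'sub hb).1.1.2 (Or.inr hadj)
      · exact (hJ'sub ha).1.1.2 (Or.inr hadj.symm)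
      · exact hJ'indep ha hb hadj
    · -- the count
      set CovJ : Set V := {u | u ∈ U ∧ ∃ j ∈ insert x J', G.Adj j u} with hCovJ
      set Cov'' : Set V := {u | u ∈ U'' ∧ ∃ j ∈ J', G.Adj j u} with hCov''
      have hsub1 : Cov ⊆ CovJ := by
        rintro u ⟨hadj, huU⟩
        exact ⟨huU, x, Set.mem_insert x _, hadj⟩
      have hsub2 : Cov'' ⊆ CovJ := by
        rintro u ⟨huU'', j, hj, hadj⟩
        exact ⟨huU''.1, j, Or.inr hj, hadj⟩
      have hdisj : Disjoint Cov Cov'' := by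
        rw [Set.disjoint_left]
        rintro u ⟨hadj, _⟩ ⟨⟨_, huW'', _⟩, _⟩
        exact huW''.2 (Or.inr hadj)
      have hcount1 : g + Cov''.ncard ≤ CovJ.ncard := by
        have := Set.ncard_union_eq hdisj (Set.toFinite _) (Set.toFinite _)
        have h2 : (Cov ∪ Cov'').ncard ≤ CovJ.ncard :=
          Set.ncard_le_ncard (Set.union_subset hsub1 hsub2)
        have : Cov.ncard = g := rfl
        omega
      -- the partition of U
      have hpart : U ⊆ Cov ∪ Iso ∪ U'' := by
        intro u huU
        by_cases h1 : u ∈ G.neighborSet x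
        · exact Or.inl (Or.inl ⟨h1, huU⟩)
        · have huW' : u ∈ W' := by
            refine ⟨hUW huU, ?_⟩
            rintro (rfl | hc)
            · exact hxU huU
            · exact h1 hc
          by_cases h2 : u ∈ Iso
          · exact Or.inl (Or.inr h2)
          · exact Or.inr ⟨huU, huW', h2⟩
      -- the Iso bound
      have hIsoBound : Iso.ncard ≤ (Δ - g) * g := by
        set Y : Set V := G.neighborSet x ∩ (W \ U) with hY
        have hYcard : Y.ncard ≤ Δ - g := by
          have hd : Disjoint Cov Y := by
            rw [Set.disjoint_left]
            rintro u ⟨_, huU⟩ ⟨_, _, huU'⟩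
            exact huU' huU
          have h1 : Cov ∪ Y ⊆ G.neighborSet x :=
            Set.union_subset Set.inter_subset_left Set.inter_subset_left
          have h2 := Set.ncard_union_eq hd (Set.toFinite _) (Set.toFinite _)
          have h3 : (Cov ∪ Y).ncard ≤ Δ :=
            le_trans (Set.ncard_le_ncard h1) (hdeg x)
          have h4 : Cov.ncard = g := rfl
          omega
        have hIsoSub : Iso ⊆ ⋃ y ∈ Y, (G.neighborSet y ∩ U) := by
          rintro u ⟨⟨huU, huW'⟩, hno⟩
          obtain ⟨y, hyW, hyadj⟩ := hnbr u huU
          have hyU : y ∉ U := fun h => hU huU h hyadj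
          have hyW' : y ∉ W' := fun h => hno y h hyadj
          have hymem : y ∈ insert x (G.neighborSet x) := by
            by_contra hc
            exact hyW' ⟨hyW, hc⟩
          have hyx : y ≠ x := by
            rintro rfl
            exact huW'.2 (Or.inr hyadj.symm)
          have hyNx : y ∈ G.neighborSet x := by
            rcases hymem with rfl | h
            · exact absurd rfl hyx
            · exact h
          simp only [Set.mem_iUnion, exists_prop]
          exact ⟨y, ⟨hyNx, hyW, hyU⟩, hyadj.symm, huU⟩
        have hsmall : ∀ y, ((fun y => G.neighborSet y ∩ U) y).ncard ≤ g ∨ y ∉ Y := by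
          intro y
          by_cases hy : y ∈ Y
          · exact Or.inl (hxmax y hy.2)
          · exact Or.inr hy
        -- restrict the family to Y
        have := aux_cover_card_le (fun y => if y ∈ Y then G.neighborSet y ∩ U else ∅) g
          (by
            intro y
            by_cases hy : y ∈ Y
            · simpa [hy] using hxmax y hy.2
            · simp [hy])
          Y Iso
          (by
            intro u hu
            have := hIsoSub hu
            simp only [Set.mem_iUnion, exists_prop] at this ⊢
            obtain ⟨y, hy, hu2⟩ := this
            exact ⟨y, hy, by simpa [hy] using hu2⟩)
        calc Iso.ncard ≤ Y.ncard * g := this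
          _ ≤ (Δ - g) * g := Nat.mul_le_mul_right _ hYcard
      -- put everything together
      have htot : U.ncard ≤ Cov.ncard + Iso.ncard + U''.ncard := by
        calc U.ncard ≤ (Cov ∪ Iso ∪ U'').ncard := Set.ncard_le_ncard hpart
          _ ≤ (Cov ∪ Iso).ncard + U''.ncard := Set.ncard_union_le _ _
          _ ≤ Cov.ncard + Iso.ncard + U''.ncard := by
              have := Set.ncard_union_le Cov Iso
              omega
      have hgΔ : g ≤ Δ := le_trans (Set.ncard_le_ncard Set.inter_subset_left) (hdeg x)
      have hIso2 : Iso.ncard ≤ (Δ - 1) * g :=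
        le_trans hIsoBound (Nat.mul_le_mul_right _ (Nat.sub_le_sub_left hg1 Δ))
      have hCovg : Cov.ncard = g := rfl
      have key : U.ncard ≤ Δ * (g + Cov''.ncard) := by
        have h1 : g + (Δ - 1) * g = Δ * g := by
          have : Δ - 1 + 1 = Δ := Nat.sub_add_cancel (le_trans hg1 hgΔ)
          calc g + (Δ - 1) * g = (Δ - 1 + 1) * g := by ring
            _ = Δ * g := by rw [this]
        calc U.ncard ≤ Cov.ncard + Iso.ncard + U''.ncard := htot
          _ ≤ g + (Δ - 1) * g + Δ * Cov''.ncard :=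
              add_le_add (add_le_add (le_of_eq hCovg) hIso2) hJ'count
          _ = Δ * g + Δ * Cov''.ncard := by rw [h1]
          _ = Δ * (g + Cov''.ncard) := by ring
      calc U.ncard ≤ Δ * (g + Cov''.ncard) := key
        _ ≤ Δ * CovJ.ncard := Nat.mul_le_mul_left _ hcount1


/-- If `G` has maximum degree `Δ ≥ 1`, no isolated vertices, and `U` is an
independent set, then there is `U' ⊆ U` with `Δ·|U'| ≥ |U|` such that `(G, U')` is a
yes-instance of Ext VC; in particular, there is a minimal vertex cover `S` of `G` with
`Δ·|S ∩ U| ≥ opt_MaxExtVC(G, U)`. -/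

theorem statement_13 {V : Type*} [Fintype V] (G : SimpleGraph V) (U : Set V) (Δ : ℕ)
    (hΔ : 1 ≤ Δ) (hdeg : ∀ v : V, (G.neighborSet v).ncard ≤ Δ)
    (hnoiso : ∀ v : V, ∃ w : V, G.Adj v w)
    (hU : IsIndepSet G U) :
    (∃ U' ⊆ U, U.ncard ≤ Δ * U'.ncard ∧ ExtVC G U') ∧
      ∃ S : Set V, IsMinimalVertexCover G S ∧ optMaxExtVC G U ≤ Δ * (S ∩ U).ncard := by
  classical
  -- Step 1: greedy covering
  obtain ⟨J₀, hJ₀sub, hJ₀indep, hJ₀count⟩ :=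
    greedy_cover G Δ hdeg U.ncard U Set.univ le_rfl (Set.subset_univ U) hU
      (fun u _ => by obtain ⟨w, hw⟩ := hnoiso u; exact ⟨w, Set.mem_univ w, hw⟩)
  have hJ₀U : ∀ j ∈ J₀, j ∉ U := fun j hj => (hJ₀sub hj).2
  -- Step 2: extend J₀ to a maximum independent set among those avoiding U
  set F : Set (Set V) := {K | J₀ ⊆ K ∧ (∀ j ∈ K, j ∉ U) ∧ IsIndepSet G K} with hF
  have hFne : F.Nonempty := ⟨J₀, subset_rfl, hJ₀U, hJ₀indep⟩
  obtain ⟨J, hJF, hJmax⟩ := Set.exists_max_image F Set.ncard (Set.toFinite F) hFne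
  obtain ⟨hJ₀J, hJU, hJindep⟩ := hJF
  have hdom : ∀ v : V, v ∉ U → v ∉ J → ∃ j ∈ J, G.Adj j v := by
    intro v hvU hvJ
    by_contra hcon
    push_neg at hcon
    have hins : insert v J ∈ F := by
      refine ⟨subset_trans hJ₀J (Set.subset_insert _ _), ?_, ?_⟩
      · rintro j (rfl | hj)
        · exact hvU
        · exact hJU j hj
      · rintro a b (rfl | ha) (rfl | hb) hadj
        · exact G.irrefl hadj
        · exact hcon b hb hadj.symm
        · exact hcon a ha hadj
        · exact hJindep ha hb hadj
    have h1 := hJmax _ hins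
    rw [Set.ncard_insert_of_notMem hvJ] at h1
    omega
  -- Step 3: the minimal vertex cover
  set A : Set V := {u | u ∈ U ∧ ¬ ∃ j ∈ J, G.Adj j u} with hA
  set I : Set V := J ∪ A with hI
  have hIindep : IsIndepSet G I := by
    rintro a b (ha | ha) (hb | hb) hadj
    · exact hJindep ha hb hadj
    · exact hb.2 ⟨a, ha, hadj⟩
    · exact ha.2 ⟨b, hb, hadj.symm⟩
    · exact hU ha.1 hb.1 hadj
  have hIdom : ∀ v, v ∉ I → ∃ j ∈ I, G.Adj j v := by
    intro v hv
    by_cases hvU : v ∈ U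
    · have hvA : v ∉ A := fun h => hv (Or.inr h)
      have : ∃ j ∈ J, G.Adj j v := by
        by_contra hc
        exact hvA ⟨hvU, hc⟩
      obtain ⟨j, hj, hadj⟩ := this
      exact ⟨j, Or.inl hj, hadj⟩
    · obtain ⟨j, hj, hadj⟩ := hdom v hvU (fun h => hv (Or.inl h))
      exact ⟨j, Or.inl hj, hadj⟩
  have hSmin : IsMinimalVertexCover G Iᶜ := by
    constructor
    · intro u v hadj
      by_contra h
      push_neg at h
      obtain ⟨h1, h2⟩ := h
      simp only [Set.mem_compl_iff, not_not] at h1 h2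
      exact hIindep h1 h2 hadj
    · intro T hT hTVC
      obtain ⟨v, hvS, hvT⟩ := Set.exists_of_ssubset hT
      obtain ⟨j, hjI, hadj⟩ := hIdom v hvS
      rcases hTVC hadj with hjT | hvT'
      · exact (hT.subset hjT) hjI
      · exact hvT hvT'
  -- Step 4: the set U'
  set U' : Set V := {u | u ∈ U ∧ ∃ j ∈ J, G.Adj j u} with hU'
  have hU'subU : U' ⊆ U := fun u hu => hu.1
  have hU'S : U' ⊆ Iᶜ := by
    rintro u ⟨huU, hex⟩ (huJ | huA)
    · exact hJU u huJ huU
    · exact huA.2 hex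
  have hcount : U.ncard ≤ Δ * U'.ncard := by
    refine le_trans hJ₀count (Nat.mul_le_mul_left _ (Set.ncard_le_ncard ?_))
    rintro u ⟨huU, j, hj, hadj⟩
    exact ⟨huU, j, hJ₀J hj, hadj⟩
  have hU'IU : U' ⊆ Iᶜ ∩ U := fun u hu => ⟨hU'S hu, hU'subU hu⟩
  constructor
  · exact ⟨U', hU'subU, hcount, Iᶜ, hU'S, hSmin⟩
  · refine ⟨Iᶜ, hSmin, ?_⟩
    refine csSup_le ⟨(Iᶜ ∩ U).ncard, Iᶜ, hSmin, rfl⟩ ?_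
    rintro n ⟨S', _, rfl⟩
    calc (S' ∩ U).ncard ≤ U.ncard := Set.ncard_le_ncard Set.inter_subset_right
      _ ≤ Δ * U'.ncard := hcount
      _ ≤ Δ * (Iᶜ ∩ U).ncard := Nat.mul_le_mul_left _ (Set.ncard_le_ncard hU'IU)
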